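/- Assume in addition that λ0 is purely imaginary (Re(λ0) = 0) and that the parameter vector β ∈ ℂ^{n+1} satisfies β = J·conj(β), i.e. its first component β_1 is real and β_{1+j} = −conj(β_{1+(n+1−j)}) for every j = 1,…,n. Then the first-order rogue wave is parity-time symmetric: for every j = 1,…,n and all (x,t) ∈ ℝ², q_j^{[1]}(x,t) = conj( q_{n+1−j}^{[1]}(x, −t) ). -/

import Mathlib

open Complex Matrix Finset

noncomputable section

/-- Index type for `(n+1)×(n+1)` matrices: a `1`-block plus an `n`-block. -/
abbrev Idx (n : ℕ) := Fin 1 ⊕ Fin n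

/-- `ζ = 2·Im(λ0)/(n+1)`. -/
def zeta (n : ℕ) (l0 : ℂ) : ℝ := 2 * l0.im / (n + 1)

/-- `ω_j = jπ/(n+1)`. -/
def om (n j : ℕ) : ℝ := j * Real.pi / (n + 1)

/-- `a_j = ζ·csc(ω_j)` for `j = 1,…,n` (indexed by `j : Fin n` as `j+1`). -/
def aa (n : ℕ) (l0 : ℂ) (j : Fin n) : ℝ := zeta n l0 / Real.sin (om n ((j : ℕ) + 1))

/-- `b_j = ζ·cot(ω_j) − 2·Re(λ0)` for `j = 1,…,n`. -/
def bb (n : ℕ) (l0 : ℂ) (j : Fin n) : ℝ :=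
  zeta n l0 * (Real.cos (om n ((j : ℕ) + 1)) / Real.sin (om n ((j : ℕ) + 1))) - 2 * l0.re

/-- `z0 = 2·Re(λ0) + i·ζ`. -/
def zz0 (n : ℕ) (l0 : ℂ) : ℂ := 2 * l0.re + Complex.I * zeta n l0

/-- The `(n+1)×(n+1)` matrix `B` with `(1,1)` entry `i·n·ζ`, first row/column entries `a_j`,
diagonal entries `−(z0 + b_j)` and all other entries `0`. -/
def Bmat (n : ℕ) (l0 : ℂ) : Matrix (Idx n) (Idx n) ℂ :=
  Matrix.fromBlocks
    (Matrix.of fun _ _ => Complex.I * n * zeta n l0)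
    (Matrix.of fun _ j => (aa n l0 j : ℂ))
    (Matrix.of fun i _ => (aa n l0 i : ℂ))
    (Matrix.diagonal fun j => -(zz0 n l0 + (bb n l0 j : ℂ)))

/-- The vector `ξ_0 = (1, a_1/(z0+b_1), …, a_n/(z0+b_n))ᵀ`. -/
def xi0 (n : ℕ) (l0 : ℂ) : Idx n → ℂ :=
  Sum.elim (fun _ => 1)
    (fun k : Fin n => (aa n l0 k : ℂ) / (zz0 n l0 + (bb n l0 k : ℂ)))

/-- The matrix polynomial
`A(x,t) = Σ_{s=0}^{n} Σ_{k=0}^{⌊n/2⌋} (i^{s+k}/(2^k s! k!)) B^{s+2k} (x+z0 t)^s t^k`. -/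
def Amat (n : ℕ) (l0 : ℂ) (x t : ℝ) : Matrix (Idx n) (Idx n) ℂ :=
  ∑ s ∈ Finset.range (n + 1), ∑ k ∈ Finset.range (n / 2 + 1),
    ((Complex.I ^ (s + k) * ((x : ℂ) + zz0 n l0 * (t : ℂ)) ^ s * (t : ℂ) ^ k) /
        ((2 : ℂ) ^ k * (Nat.factorial s : ℂ) * (Nat.factorial k : ℂ))) •
      (Bmat n l0) ^ (s + 2 * k)

/-- The plane-wave phase `θ_j(x,t) = b_j x − (b_j²/2 − Σ_k a_k²) t`. -/
def theta (n : ℕ) (l0 : ℂ) (j : Fin n) (x t : ℝ) : ℝ :=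
  bb n l0 j * x - ((bb n l0 j) ^ 2 / 2 - ∑ k, (aa n l0 k) ^ 2) * t

/-- The plane-wave background `q_j^{bg}(x,t) = a_j e^{iθ_j(x,t)}`. -/
def qbg (n : ℕ) (l0 : ℂ) (j : Fin n) (x t : ℝ) : ℂ :=
  (aa n l0 j : ℂ) * Complex.exp (Complex.I * (theta n l0 j x t : ℝ))

/-- The vector `w(x,t) = A(x,t)·β`. -/
def wvec (n : ℕ) (l0 : ℂ) (β : Idx n → ℂ) (x t : ℝ) : Idx n → ℂ :=
  (Amat n l0 x t).mulVec β

/-- The first-order rogue wave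
`q_j^{[1]} = q_j^{bg}·(1 − 2i(n+1)ζ w_{j+1} conj(w_1)/(a_j ‖w‖²))`. -/
def q1 (n : ℕ) (l0 : ℂ) (β : Idx n → ℂ) (j : Fin n) (x t : ℝ) : ℂ :=
  qbg n l0 j x t *
    (1 - 2 * Complex.I * ((n : ℂ) + 1) * (zeta n l0 : ℝ) *
        wvec n l0 β x t (Sum.inr j) * (starRingEnd ℂ) (wvec n l0 β x t (Sum.inl 0)) /
      ((aa n l0 j : ℂ) * ((∑ i, Complex.normSq (wvec n l0 β x t i) : ℝ) : ℂ)))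


/-! ### Auxiliary definitions for the PT-symmetry proof -/

/-- Sign pattern: `+1` on the first block, `-1` on the second. -/
def sg (n : ℕ) : Idx n → ℂ := Sum.elim (fun _ => 1) (fun _ => -1)

/-- The index involution: identity on the first block, `Fin.rev` on the second. -/
def sig (n : ℕ) : Idx n → Idx n := Sum.map id Fin.rev

lemma sg_sq (n : ℕ) (i : Idx n) : sg n i * sg n i = 1 := by
  cases i <;> simp [sg]

lemma sig_invol (n : ℕ) : Function.Involutive (sig n) := fun i => by
  cases i <;> simp [sig]

lemma om_rev (n : ℕ) (j : Fin n) :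
    om n ((j.rev : ℕ) + 1) = Real.pi - om n ((j : ℕ) + 1) := by
  unfold om
  have h1 : ((j.rev : ℕ) + 1) = n - (j : ℕ) := by
    have := j.isLt
    rw [Fin.val_rev]
    omega
  rw [h1]
  have hj : (j : ℕ) ≤ n := le_of_lt j.isLt
  have h2 : ((n - (j : ℕ) : ℕ) : ℝ) = (n : ℝ) - (j : ℝ) := by
    rw [Nat.cast_sub hj]
  rw [h2]
  have hne : (n : ℝ) + 1 ≠ 0 := by positivity
  field_simp
  push_cast
  ring

lemma aa_rev (n : ℕ) (l0 : ℂ) (j : Fin n) : aa n l0 j.rev = aa n l0 j := by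
  unfold aa
  rw [om_rev, Real.sin_pi_sub]

lemma bb_rev (n : ℕ) (l0 : ℂ) (hre : l0.re = 0) (j : Fin n) :
    bb n l0 j.rev = -(bb n l0 j) := by
  unfold bb
  rw [om_rev, Real.sin_pi_sub, Real.cos_pi_sub, hre]
  ring

lemma conj_zz0 (n : ℕ) (l0 : ℂ) (hre : l0.re = 0) :
    (starRingEnd ℂ) (zz0 n l0) = -zz0 n l0 := by
  unfold zz0
  rw [hre]
  simp [Complex.conj_ofReal]

lemma conj_B (n : ℕ) (l0 : ℂ) (hre : l0.re = 0) (i j : Idx n) :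
    (starRingEnd ℂ) (Bmat n l0 i j) =
      -(sg n i * sg n j * Bmat n l0 (sig n i) (sig n j)) := by
  have hz := conj_zz0 n l0 hre
  rcases i with i | i <;> rcases j with j | j
  · simp only [Bmat, sig, Sum.map_inl, id_eq, fromBlocks_apply₁₁, of_apply, sg, Sum.elim_inl,
      _root_.map_mul, Complex.conj_I, _root_.map_natCast, Complex.conj_ofReal]
    ring
  · simp only [Bmat, sig, Sum.map_inl, Sum.map_inr, id_eq, fromBlocks_apply₁₂, of_apply, sg,
      Sum.elim_inl, Sum.elim_inr, Complex.conj_ofReal, aa_rev]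
    ring
  · simp only [Bmat, sig, Sum.map_inl, Sum.map_inr, id_eq, fromBlocks_apply₂₁, of_apply, sg,
      Sum.elim_inl, Sum.elim_inr, Complex.conj_ofReal, aa_rev]
    ring
  · simp only [Bmat, sig, Sum.map_inr, fromBlocks_apply₂₂, diagonal_apply, sg, Sum.elim_inr]
    by_cases h : i = j
    · subst h
      rw [if_pos rfl, if_pos rfl, _root_.map_neg, _root_.map_add, hz, Complex.conj_ofReal]
      have : ((bb n l0 i.rev : ℝ) : ℂ) = -((bb n l0 i : ℝ) : ℂ) := by
        rw [bb_rev n l0 hre]; push_cast; ring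
      rw [this]
      ring
    · rw [if_neg h, if_neg (fun hh => h (Fin.rev_inj.mp hh))]
      simp

lemma conj_Bpow (n : ℕ) (l0 : ℂ) (hre : l0.re = 0) (m : ℕ) (i j : Idx n) :
    (starRingEnd ℂ) ((Bmat n l0 ^ m) i j) =
      (-1 : ℂ) ^ m * sg n i * sg n j * (Bmat n l0 ^ m) (sig n i) (sig n j) := by
  induction m generalizing i j with
  | zero =>
    simp only [pow_zero, Matrix.one_apply]
    by_cases h : i = j
    · subst h
      rw [if_pos rfl, if_pos rfl, _root_.map_one]
      linear_combination (-1 : ℂ) * sg_sq n i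
    · rw [if_neg h, if_neg (fun hh => h ((sig_invol n).injective hh)), _root_.map_zero, mul_zero]
  | succ m ih =>
    have hBp : Bmat n l0 ^ (m + 1) = Bmat n l0 * Bmat n l0 ^ m := pow_succ' _ _
    rw [hBp]
    simp only [Matrix.mul_apply]
    rw [_root_.map_sum]
    have hre2 : ∀ l : Idx n,
        (starRingEnd ℂ) (Bmat n l0 i l * (Bmat n l0 ^ m) l j) =
          (-1 : ℂ) ^ (m + 1) * sg n i * sg n j *
            (Bmat n l0 (sig n i) (sig n l) * (Bmat n l0 ^ m) (sig n l) (sig n j)) := by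
      intro l
      rw [_root_.map_mul, conj_B n l0 hre, ih]
      linear_combination (-((-1:ℂ)^m * sg n i * sg n j *
        Bmat n l0 (sig n i) (sig n l) * (Bmat n l0 ^ m) (sig n l) (sig n j))) * sg_sq n l
    rw [Finset.sum_congr rfl (fun l _ => hre2 l), ← Finset.mul_sum]
    congr 1
    exact Fintype.sum_equiv ((sig_invol n).toPerm) _ _ (fun l => rfl)

lemma conj_Amat (n : ℕ) (l0 : ℂ) (hre : l0.re = 0) (x t : ℝ) (i j : Idx n) :
    (starRingEnd ℂ) (Amat n l0 x (-t) i j) =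
      sg n i * sg n j * Amat n l0 x t (sig n i) (sig n j) := by
  unfold Amat
  simp only [Matrix.sum_apply, Matrix.smul_apply, smul_eq_mul, _root_.map_sum]
  rw [Finset.mul_sum]
  refine Finset.sum_congr rfl fun s _ => ?_
  rw [Finset.mul_sum]
  refine Finset.sum_congr rfl fun k _ => ?_
  rw [_root_.map_mul, map_div₀, conj_Bpow n l0 hre]
  have hz := conj_zz0 n l0 hre
  have h1 : (starRingEnd ℂ) ((x : ℂ) + zz0 n l0 * ((-t : ℝ) : ℂ)) =
      (x : ℂ) + zz0 n l0 * (t : ℂ) := by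
    simp only [_root_.map_add, _root_.map_mul, hz, Complex.ofReal_neg, _root_.map_neg,
      Complex.conj_ofReal]
    ring
  rw [_root_.map_mul, _root_.map_mul, _root_.map_pow, _root_.map_pow, _root_.map_pow, h1, Complex.conj_I, Complex.conj_ofReal,
    _root_.map_mul, _root_.map_mul, _root_.map_pow]
  simp only [_root_.map_natCast, _root_.map_ofNat]
  have ht : ((-t : ℝ) : ℂ) = -(t : ℂ) := by push_cast; ring
  rw [ht, neg_pow Complex.I, neg_pow ((t : ℂ))]
  have hsign : ((-1 : ℂ)) ^ (s + k) * ((-1 : ℂ)) ^ k * ((-1 : ℂ)) ^ (s + 2 * k) = 1 := by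
    rw [← pow_add, ← pow_add]
    have h : s + k + k + (s + 2 * k) = 2 * (s + 2 * k) := by ring
    rw [h, pow_mul]
    norm_num
  linear_combination (Complex.I ^ (s + k) * ((x : ℂ) + zz0 n l0 * (t : ℂ)) ^ s * (t : ℂ) ^ k /
    ((2 : ℂ) ^ k * (Nat.factorial s : ℂ) * (Nat.factorial k : ℂ)) *
    sg n i * sg n j * (Bmat n l0 ^ (s + 2 * k)) (sig n i) (sig n j)) * hsign

lemma conj_wvec (n : ℕ) (l0 : ℂ) (hre : l0.re = 0) (β : Idx n → ℂ)
    (hβ1 : (β (Sum.inl 0)).im = 0)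
    (hβJ : ∀ k : Fin n, β (Sum.inr k) = -(starRingEnd ℂ) (β (Sum.inr k.rev)))
    (x t : ℝ) (i : Idx n) :
    (starRingEnd ℂ) (wvec n l0 β x (-t) i) = sg n i * wvec n l0 β x t (sig n i) := by
  have hb : ∀ j : Idx n, (starRingEnd ℂ) (β j) = sg n j * β (sig n j) := by
    intro j
    rcases j with j | j
    · have hj0 : j = 0 := Subsingleton.elim j 0
      subst hj0
      simp only [sg, sig, Sum.elim_inl, Sum.map_inl, id_eq, one_mul]
      exact Complex.conj_eq_iff_im.mpr hβ1
    · rw [hβJ j]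
      simp only [sg, sig, Sum.elim_inr, Sum.map_inr, _root_.map_neg, Complex.conj_conj]
      rw [hβJ j.rev, Fin.rev_rev]
      ring
  unfold wvec Matrix.mulVec
  simp only [dotProduct]
  rw [_root_.map_sum]
  have hterm : ∀ j : Idx n,
      (starRingEnd ℂ) (Amat n l0 x (-t) i j * β j) =
        sg n i * (Amat n l0 x t (sig n i) (sig n j) * β (sig n j)) := by
    intro j
    rw [_root_.map_mul, conj_Amat n l0 hre, hb]
    linear_combination (sg n i * Amat n l0 x t (sig n i) (sig n j) * β (sig n j)) * sg_sq n j
  rw [Finset.sum_congr rfl (fun j _ => hterm j), ← Finset.mul_sum]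
  congr 1
  exact Fintype.sum_equiv ((sig_invol n).toPerm) _ _ (fun l => rfl)

lemma normSq_sum_w (n : ℕ) (l0 : ℂ) (hre : l0.re = 0) (β : Idx n → ℂ)
    (hβ1 : (β (Sum.inl 0)).im = 0)
    (hβJ : ∀ k : Fin n, β (Sum.inr k) = -(starRingEnd ℂ) (β (Sum.inr k.rev)))
    (x t : ℝ) :
    (∑ i, Complex.normSq (wvec n l0 β x (-t) i)) =
      ∑ i, Complex.normSq (wvec n l0 β x t i) := by
  refine Fintype.sum_equiv ((sig_invol n).toPerm) _ _ (fun i => ?_)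
  rw [← Complex.normSq_conj (wvec n l0 β x (-t) i),
    conj_wvec n l0 hre β hβ1 hβJ x t i, Complex.normSq_mul]
  have hs : Complex.normSq (sg n i) = 1 := by cases i <;> simp [sg]
  rw [hs, one_mul]
  rfl

lemma theta_rev (n : ℕ) (l0 : ℂ) (hre : l0.re = 0) (j : Fin n) (x t : ℝ) :
    theta n l0 j.rev x (-t) = -(theta n l0 j x t) := by
  unfold theta
  rw [bb_rev n l0 hre]
  have : ∑ k, (aa n l0 k) ^ 2 = ∑ k, (aa n l0 k) ^ 2 := rfl
  ring

lemma conj_qbg (n : ℕ) (l0 : ℂ) (hre : l0.re = 0) (j : Fin n) (x t : ℝ) :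
    (starRingEnd ℂ) (qbg n l0 j.rev x (-t)) = qbg n l0 j x t := by
  unfold qbg
  rw [_root_.map_mul, Complex.conj_ofReal, ← Complex.exp_conj, _root_.map_mul, Complex.conj_I,
    Complex.conj_ofReal, aa_rev]
  congr 2
  rw [theta_rev n l0 hre]
  push_cast
  ring

/-- parity-time symmetry. If `λ0` is purely imaginary and
`β = J·conj(β)` (first component real, `β_{1+j} = −conj(β_{1+(n+1−j)})`), then
`q_j^{[1]}(x,t) = conj(q_{n+1−j}^{[1]}(x,−t))`. -/
theorem stmt15 (n : ℕ) (hn : 1 ≤ n) (l0 : ℂ) (hre : l0.re = 0) (him : l0.im ≠ 0)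
    (β : Idx n → ℂ) (hβ : LinearIndependent ℂ ![β, xi0 n l0])
    (hβ1 : (β (Sum.inl 0)).im = 0)
    (hβJ : ∀ k : Fin n, β (Sum.inr k) = -(starRingEnd ℂ) (β (Sum.inr k.rev))) :
    ∀ (j : Fin n) (x t : ℝ),
      q1 n l0 β j x t = (starRingEnd ℂ) (q1 n l0 β j.rev x (-t)) := by
  intro j x t
  have hN := normSq_sum_w n l0 hre β hβ1 hβJ x t
  have hwr : (starRingEnd ℂ) (wvec n l0 β x (-t) (Sum.inr j.rev)) =
      -(wvec n l0 β x t (Sum.inr j)) := by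
    rw [conj_wvec n l0 hre β hβ1 hβJ x t]
    simp [sg, sig, Fin.rev_rev]
  have hw1 : (starRingEnd ℂ) (wvec n l0 β x (-t) (Sum.inl 0)) =
      wvec n l0 β x t (Sum.inl 0) := by
    rw [conj_wvec n l0 hre β hβ1 hβJ x t]
    simp [sg, sig]
  have hw1' : wvec n l0 β x (-t) (Sum.inl 0) =
      (starRingEnd ℂ) (wvec n l0 β x t (Sum.inl 0)) := by
    rw [← hw1, Complex.conj_conj]
  unfold q1
  rw [_root_.map_mul, conj_qbg n l0 hre j x t]
  refine congrArg (fun z => qbg n l0 j x t * z) ?_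
  rw [_root_.map_sub, _root_.map_one, map_div₀]
  rw [_root_.map_mul, _root_.map_mul, _root_.map_mul, _root_.map_mul, _root_.map_mul, _root_.map_mul]
  rw [Complex.conj_I, Complex.conj_conj, Complex.conj_ofReal, Complex.conj_ofReal,
    Complex.conj_ofReal, hwr, hw1', _root_.map_add, _root_.map_natCast, _root_.map_one, _root_.map_ofNat]
  rw [aa_rev n l0 j, hN]
  ring


end
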